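/- arXiv:2108.11577 — 2 statements merged into one kernel-verified Lean document; each statement's English description precedes it below -/
import Mathlib

section
/- Suppose θ(·) : ℝ → ℝ^p is differentiable at ε = 0 with θ(0) = θ*, the function L(·; D) + ε(ℓ(z̃, ·) − ℓ(z, ·)) is twice continuously differentiable in θ, and for every ε in a neighborhood of 0 the stationarity condition ∇_θ L(θ(ε); D) + ε ∇_θ ℓ(z̃, θ(ε)) − ε ∇_θ ℓ(z, θ(ε)) = 0 holds. Then the derivative of the model parameters with respect to the up-weighting parameter satisfies H_{θ*} · θ′(0) = −( ∇_θ ℓ(z̃, θ*) − ∇_θ ℓ(z, θ*) ), where H_{θ*} = ∇²_θ L(θ*; D); in particular, if H_{θ*} is invertible, θ′(0) = −H_{θ*}^{-1}( ∇_θ ℓ(z̃, θ*) − ∇_θ ℓ(z, θ*) ). -/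
open InnerProductSpace

lemma grad_diffble {p : ℕ} {f : EuclideanSpace ℝ (Fin p) → ℝ} (hf : ContDiff ℝ 2 f) :
    Differentiable ℝ (gradient f) := by
  have h1 : ContDiff ℝ 1 (fderiv ℝ f) := hf.fderiv_right (by norm_num)
  have : gradient f = fun x => (toDual ℝ (EuclideanSpace ℝ (Fin p))).symm (fderiv ℝ f x) := rfl
  rw [this]
  exact (toDual ℝ (EuclideanSpace ℝ (Fin p))).symm.toContinuousLinearEquiv.differentiable.comp
    (h1.differentiable one_ne_zero)


/-- **Influence-function derivative of the up-weighted minimizer.** If `θ(ε)` satisfies the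
stationarity condition `∇L(θ(ε); D) + ε∇ℓ(z̃, θ(ε)) − ε∇ℓ(z, θ(ε)) = 0` in a neighborhood
of `0`, is differentiable at `ε = 0` with `θ(0) = θ*`, and the objective is twice
continuously differentiable, then `H_{θ*} θ′(0) = −(∇ℓ(z̃, θ*) − ∇ℓ(z, θ*))` with
`H_{θ*} = ∇²L(θ*; D)`; in particular if `H_{θ*}` is invertible,
`θ′(0) = −H_{θ*}^{-1}(∇ℓ(z̃, θ*) − ∇ℓ(z, θ*))`. -/
theorem deriv_upweighted_minimizer_eq_neg_inv_hessian_grad_diff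
    {d p n : ℕ} {Y : Type*}
    (ℓ : (EuclideanSpace ℝ (Fin d) × Y) → EuclideanSpace ℝ (Fin p) → ℝ)
    (Ω : EuclideanSpace ℝ (Fin p) → ℝ) (lam : ℝ)
    (D : Fin n → EuclideanSpace ℝ (Fin d) × Y)
    (L : EuclideanSpace ℝ (Fin p) → ℝ)
    (hLdef : L = fun θ => ∑ i, ℓ (D i) θ + lam * Ω θ)
    (z ztil : EuclideanSpace ℝ (Fin d) × Y)
    -- `L + ε (ℓ(z̃, ·) − ℓ(z, ·))` is twice continuously differentiable in `θ` for all `ε`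
    (hC2L : ContDiff ℝ 2 L) (hC2til : ContDiff ℝ 2 (ℓ ztil)) (hC2z : ContDiff ℝ 2 (ℓ z))
    (θ : ℝ → EuclideanSpace ℝ (Fin p)) (θs : EuclideanSpace ℝ (Fin p))
    (hθ0 : θ 0 = θs) (hdiff : DifferentiableAt ℝ θ 0)
    (ε₀ : ℝ) (hε₀ : 0 < ε₀)
    (hstat : ∀ ε : ℝ, |ε| < ε₀ →
      gradient L (θ ε) + ε • gradient (ℓ ztil) (θ ε) - ε • gradient (ℓ z) (θ ε) = 0) :
    fderiv ℝ (gradient L) θs (deriv θ 0) =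
      -(gradient (ℓ ztil) θs - gradient (ℓ z) θs) ∧
    ∀ Hinv : EuclideanSpace ℝ (Fin p) →L[ℝ] EuclideanSpace ℝ (Fin p),
      (∀ v, Hinv (fderiv ℝ (gradient L) θs v) = v) →
      deriv θ 0 = -(Hinv (gradient (ℓ ztil) θs - gradient (ℓ z) θs)) := by
  have hdL := grad_diffble hC2L
  have hdt := grad_diffble hC2til
  have hdz := grad_diffble hC2z
  have hθ : HasDerivAt θ (deriv θ 0) 0 := hdiff.hasDerivAt
  have hA : HasDerivAt (fun ε => gradient L (θ ε))
      (fderiv ℝ (gradient L) θs (deriv θ 0)) 0 := by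
    have := ((hdL (θ 0)).hasFDerivAt).comp_hasDerivAt 0 hθ
    rwa [hθ0] at this
  have hgt : HasDerivAt (fun ε => gradient (ℓ ztil) (θ ε))
      (fderiv ℝ (gradient (ℓ ztil)) θs (deriv θ 0)) 0 := by
    have := ((hdt (θ 0)).hasFDerivAt).comp_hasDerivAt 0 hθ
    rwa [hθ0] at this
  have hgz : HasDerivAt (fun ε => gradient (ℓ z) (θ ε))
      (fderiv ℝ (gradient (ℓ z)) θs (deriv θ 0)) 0 := by
    have := ((hdz (θ 0)).hasFDerivAt).comp_hasDerivAt 0 hθ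
    rwa [hθ0] at this
  have hB : HasDerivAt (fun ε : ℝ => ε • gradient (ℓ ztil) (θ ε))
      (gradient (ℓ ztil) θs) 0 := by
    have := (hasDerivAt_id (0 : ℝ)).smul hgt
    exact this.congr_deriv (by simp [hθ0])
  have hC : HasDerivAt (fun ε : ℝ => ε • gradient (ℓ z) (θ ε))
      (gradient (ℓ z) θs) 0 := by
    have := (hasDerivAt_id (0 : ℝ)).smul hgz
    exact this.congr_deriv (by simp [hθ0])
  have hF := (hA.add hB).sub hC
  have hEq : (fun ε : ℝ => gradient L (θ ε) + ε • gradient (ℓ ztil) (θ ε)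
      - ε • gradient (ℓ z) (θ ε)) =ᶠ[nhds (0 : ℝ)]
      (fun _ => (0 : EuclideanSpace ℝ (Fin p))) := by
    filter_upwards [Metric.ball_mem_nhds (0 : ℝ) hε₀] with ε hε
    exact hstat ε (by simpa [Real.dist_eq] using hε)
  have hF0 : HasDerivAt (fun ε : ℝ => gradient L (θ ε) + ε • gradient (ℓ ztil) (θ ε)
      - ε • gradient (ℓ z) (θ ε)) 0 0 :=
    (hasDerivAt_const (0 : ℝ) (0 : EuclideanSpace ℝ (Fin p))).congr_of_eventuallyEq hEq
  have key : fderiv ℝ (gradient L) θs (deriv θ 0) + gradient (ℓ ztil) θs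
      - gradient (ℓ z) θs = 0 := hF.unique hF0
  have h1 : fderiv ℝ (gradient L) θs (deriv θ 0)
      = -(gradient (ℓ ztil) θs - gradient (ℓ z) θs) := by
    have := key
    abel_nf at this ⊢
    linear_combination (norm := module) this
  refine ⟨h1, fun Hinv hHinv => ?_⟩
  have := hHinv (deriv θ 0)
  rw [h1, map_neg] at this
  exact this.symm
end

section
/- Fix ε ∈ (0,1), ε′ > 0 and c > √(2 ln(1.5)) (so that δ := 1.5·e^{−c²/2} < 1), and let b ∈ ℝ^p be a random vector whose coordinates are independent Gaussians with mean 0 and standard deviation σ = c·ε′/ε. Then for every fixed vector v ∈ ℝ^p with ‖v‖₂ ≤ ε′, with probability at least 1 − δ over the draw of b the ratio of the Gaussian density p at b and at b + v satisfies e^{−ε} ≤ p(b)/p(b+v) ≤ e^{ε}. -/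
open MeasureTheory ProbabilityTheory
open Real Set
open scoped NNReal ENNReal
set_option maxHeartbeats 1000000

lemma gauss_conv_pdf (a b : ℝ≥0) (ha : a ≠ 0) (hb : b ≠ 0) (y : ℝ) :
    ∫ x, gaussianPDFReal 0 a x * gaussianPDFReal 0 b (y - x) =
      gaussianPDFReal 0 (a + b) y := by
  have ha' : (0:ℝ) < a := lt_of_le_of_ne a.coe_nonneg (by exact_mod_cast Ne.symm ha)
  have hb' : (0:ℝ) < b := lt_of_le_of_ne b.coe_nonneg (by exact_mod_cast Ne.symm hb)
  set A : ℝ := (a : ℝ) with hA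
  set B : ℝ := (b : ℝ) with hB
  have hAB : (0:ℝ) < A + B := by linarith
  set k : ℝ := (A + B) / (2 * A * B) with hk
  have hk' : 0 < k := by positivity
  set m : ℝ := A * y / (A + B) with hm
  set K : ℝ := (√(2 * π * A))⁻¹ * (√(2 * π * B))⁻¹ with hK
  set E : ℝ := rexp (-y ^ 2 / (2 * (A + B))) with hE
  have hmerge : ∀ u w : ℝ,
      (√(2 * π * A))⁻¹ * rexp u * ((√(2 * π * B))⁻¹ * rexp w) = K * rexp (u + w) := by
    intro u w; rw [hK, Real.exp_add]; ring
  have hint : ∀ x, gaussianPDFReal 0 a x * gaussianPDFReal 0 b (y - x)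
      = (K * E) * rexp (-(k * (x - m) ^ 2)) := by
    intro x
    rw [gaussianPDFReal, gaussianPDFReal, hmerge, mul_assoc K E, ← Real.exp_add]
    congr 1
    rw [Real.exp_eq_exp, sub_zero, sub_zero, hk, hm, ← hA, ← hB]
    field_simp
    ring
  rw [integral_congr_ae (ae_of_all _ hint), integral_const_mul,
    integral_sub_right_eq_self (fun x => rexp (-(k * x ^ 2))) m]
  simp_rw [neg_mul_eq_neg_mul (α := ℝ)]
  rw [integral_gaussian]
  have h1 : K * √(π / k) = (√(2 * π * (A + B)))⁻¹ := by
    rw [hK, ← Real.sqrt_inv, ← Real.sqrt_inv, ← Real.sqrt_inv,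
      ← Real.sqrt_mul (by positivity), ← Real.sqrt_mul (by positivity)]
    congr 1
    rw [hk]
    field_simp
  have h2 : K * E * √(π / k) = (√(2 * π * (A + B)))⁻¹ * E := by
    rw [← h1]; ring
  rw [h2, gaussianPDFReal, sub_zero, NNReal.coe_add]

lemma gaussianReal_add_gaussianReal (a b : ℝ≥0) :
    ((gaussianReal 0 a).prod (gaussianReal 0 b)).map (fun q : ℝ × ℝ => q.1 + q.2) =
      gaussianReal 0 (a + b) := by
  by_cases ha : a = 0
  · subst ha
    rw [gaussianReal_zero_var, Measure.dirac_prod,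
      Measure.map_map measurable_add measurable_prodMk_left]
    have : ((fun q : ℝ × ℝ => q.1 + q.2) ∘ (Prod.mk (0:ℝ))) = id := by ext y; simp
    rw [this, Measure.map_id, zero_add]
  by_cases hb : b = 0
  · subst hb
    rw [gaussianReal_zero_var, Measure.prod_dirac,
      Measure.map_map measurable_add measurable_prodMk_right]
    have : ((fun q : ℝ × ℝ => q.1 + q.2) ∘ (fun x : ℝ => (x, (0:ℝ)))) = id := by ext y; simp
    rw [this, Measure.map_id, add_zero]
  have hab : a + b ≠ 0 := by simp [ha]
  have hjoint : Measurable (fun q : ℝ × ℝ => gaussianPDF q.1 b q.2) := by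
    unfold gaussianPDF gaussianPDFReal
    fun_prop
  ext s hs
  rw [Measure.map_apply measurable_add hs, Measure.prod_apply (measurable_add hs)]
  have hstep1 : ∀ x : ℝ, (gaussianReal 0 b) (Prod.mk x ⁻¹' ((fun q : ℝ × ℝ => q.1 + q.2) ⁻¹' s))
      = ∫⁻ y in s, gaussianPDF x b y := by
    intro x
    have hpre : (Prod.mk x ⁻¹' ((fun q : ℝ × ℝ => q.1 + q.2) ⁻¹' s)) = (fun y => x + y) ⁻¹' s := rfl
    rw [hpre, ← Measure.map_apply (measurable_const_add x) hs, gaussianReal_map_const_add,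
      zero_add, gaussianReal_apply x hb]
  rw [lintegral_congr hstep1]
  have hF : Measurable (fun x : ℝ => ∫⁻ y in s, gaussianPDF x b y) :=
    Measurable.lintegral_prod_right hjoint
  rw [gaussianReal_of_var_ne_zero 0 ha,
    lintegral_withDensity_eq_lintegral_mul _ (measurable_gaussianPDF 0 a) hF]
  have hmeas2 : AEMeasurable (Function.uncurry fun x y => gaussianPDF 0 a x * gaussianPDF x b y)
      (volume.prod (volume.restrict s)) :=
    (((measurable_gaussianPDF 0 a).comp measurable_fst).mul hjoint).aemeasurable
  have hswap : ∫⁻ x, ((gaussianPDF 0 a) * fun x => ∫⁻ y in s, gaussianPDF x b y) x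
      = ∫⁻ y in s, ∫⁻ x, gaussianPDF 0 a x * gaussianPDF x b y := by
    calc ∫⁻ x, ((gaussianPDF 0 a) * fun x => ∫⁻ y in s, gaussianPDF x b y) x
        = ∫⁻ x, ∫⁻ y in s, gaussianPDF 0 a x * gaussianPDF x b y := by
          refine lintegral_congr fun x => ?_
          simp only [Pi.mul_apply]
          have hbx : Measurable fun y : ℝ => gaussianPDF x b y := by
            unfold gaussianPDF gaussianPDFReal; fun_prop
          exact (lintegral_const_mul (gaussianPDF 0 a x) hbx).symm
      _ = ∫⁻ y in s, ∫⁻ x, gaussianPDF 0 a x * gaussianPDF x b y :=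
          lintegral_lintegral_swap hmeas2
  rw [hswap]
  have hinner : ∀ y : ℝ, ∫⁻ x, gaussianPDF 0 a x * gaussianPDF x b y
      = gaussianPDF 0 (a + b) y := by
    intro y
    have hsymm : ∀ x : ℝ, gaussianPDFReal x b y = gaussianPDFReal 0 b (y - x) := by
      intro x
      rw [gaussianPDFReal_sub, zero_add]
    have hbound : ∀ x : ℝ, ‖gaussianPDFReal 0 a x‖ ≤ (√(2 * π * a))⁻¹ := by
      intro x
      rw [Real.norm_eq_abs, abs_of_nonneg (gaussianPDFReal_nonneg _ _ _), gaussianPDFReal]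
      have h1 : rexp (-(x - 0) ^ 2 / (2 * a)) ≤ 1 := by
        rw [Real.exp_le_one_iff]
        apply div_nonpos_of_nonpos_of_nonneg
        · simp [sq_nonneg]
        · positivity
      calc (√(2 * π * a))⁻¹ * rexp (-(x - 0) ^ 2 / (2 * a)) ≤ (√(2 * π * a))⁻¹ * 1 := by
            gcongr
        _ = (√(2 * π * a))⁻¹ := mul_one _
    have hInt : Integrable (fun x => gaussianPDFReal 0 a x * gaussianPDFReal 0 b (y - x)) := by
      have : Integrable (fun x => gaussianPDFReal y b x) := integrable_gaussianPDFReal y b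
      have h2 : Integrable (fun x => gaussianPDFReal 0 a x * gaussianPDFReal y b x) :=
        this.bdd_mul (measurable_gaussianPDFReal 0 a).aestronglyMeasurable
          (ae_of_all _ hbound)
      refine h2.congr (ae_of_all _ fun x => ?_)
      unfold gaussianPDFReal
      ring_nf
    calc ∫⁻ x, gaussianPDF 0 a x * gaussianPDF x b y
        = ∫⁻ x, ENNReal.ofReal (gaussianPDFReal 0 a x * gaussianPDFReal 0 b (y - x)) := by
          refine lintegral_congr fun x => ?_
          rw [gaussianPDF, gaussianPDF, hsymm x,
            ENNReal.ofReal_mul (gaussianPDFReal_nonneg _ _ _)]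
      _ = ENNReal.ofReal (∫ x, gaussianPDFReal 0 a x * gaussianPDFReal 0 b (y - x)) := by
          rw [← ofReal_integral_eq_lintegral_ofReal hInt (ae_of_all _ fun x =>
            mul_nonneg (gaussianPDFReal_nonneg _ _ _) (gaussianPDFReal_nonneg _ _ _))]
      _ = gaussianPDF 0 (a + b) y := by rw [gauss_conv_pdf a b ha hb y, gaussianPDF]
  rw [setLIntegral_congr_fun hs (fun y _ => hinner y), ← gaussianReal_apply 0 hab s]

lemma pi_gaussian_map_sum (s : ℝ≥0) : ∀ (n : ℕ) (w : Fin n → ℝ),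
    (Measure.pi fun _ : Fin n => gaussianReal 0 s).map (fun x => ∑ i, w i * x i) =
      gaussianReal 0 (∑ i, Real.toNNReal ((w i)^2) * s) := by
  intro n
  induction n with
  | zero =>
    intro w
    rw [show (fun x : Fin 0 → ℝ => ∑ i, w i * x i) = fun _ => (0:ℝ) by funext x; simp]
    rw [Measure.map_const, measure_univ, one_smul]
    rw [show (∑ i : Fin 0, Real.toNNReal ((w i)^2) * s) = 0 by simp]
    exact (gaussianReal_zero_var 0).symm
  | succ n ih =>
    intro w
    set e := MeasurableEquiv.piFinSuccAbove (fun _ : Fin (n+1) => ℝ) 0 with he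
    have hmp := measurePreserving_piFinSuccAbove (fun _ : Fin (n+1) => gaussianReal 0 s) 0
    have hpi : ((gaussianReal 0 s).prod
        (Measure.pi fun _ : Fin n => gaussianReal 0 s)).map e.symm
        = Measure.pi fun _ : Fin (n+1) => gaussianReal 0 s := (hmp.symm e).map_eq
    have hg : Measurable (fun x : Fin (n+1) → ℝ => ∑ i, w i * x i) :=
      Finset.measurable_sum _ (fun i _ => (measurable_pi_apply i).const_mul _)
    rw [← hpi, Measure.map_map hg e.symm.measurable]
    have hcomp : (fun x : Fin (n+1) → ℝ => ∑ i, w i * x i) ∘ e.symm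
        = (fun r : ℝ × ℝ => r.1 + r.2) ∘
          (Prod.map (fun x : ℝ => w 0 * x) (fun y : Fin n → ℝ => ∑ j, w j.succ * y j)) := by
      funext q
      simp [e, Fin.sum_univ_succ, Fin.insertNth_zero]
    have hg1 : Measurable fun x : ℝ => w 0 * x := by fun_prop
    have hg2 : Measurable fun y : Fin n → ℝ => ∑ j, w j.succ * y j :=
      Finset.measurable_sum _ (fun i _ => (measurable_pi_apply i).const_mul _)
    rw [hcomp, ← Measure.map_map measurable_add (hg1.prodMap hg2)]
    rw [← Measure.map_prod_map _ _ hg1 hg2]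
    have h1 : (gaussianReal 0 s).map (fun x : ℝ => w 0 * x)
        = gaussianReal 0 (Real.toNNReal ((w 0)^2) * s) := by
      have h2 := gaussianReal_map_const_mul (μ := 0) (v := s) (w 0)
      have h3 : NNReal.mk ((w 0)^2) (sq_nonneg _) = Real.toNNReal ((w 0)^2) := by
        ext; simp [Real.coe_toNNReal _ (sq_nonneg _)]
      simpa [h3] using h2
    rw [h1, ih (fun j => w j.succ), gaussianReal_add_gaussianReal]
    congr 1
    rw [Fin.sum_univ_succ]

lemma gaussian_half (s : ℝ≥0) (hs : s ≠ 0) :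
    ∫ x in Ioi (0:ℝ), gaussianPDFReal 0 s x = 1/2 := by
  have heven : ∀ x : ℝ, gaussianPDFReal 0 s (-x) = gaussianPDFReal 0 s x := by
    intro x
    unfold gaussianPDFReal
    congr 2
    ring
  have h1 : ∫ x in Iic (0:ℝ), gaussianPDFReal 0 s x = ∫ x in Ioi (0:ℝ), gaussianPDFReal 0 s x := by
    rw [show (Iic (0:ℝ)) = Iic (-0 : ℝ) by norm_num, ← integral_comp_neg_Ioi]
    exact setIntegral_congr_fun measurableSet_Ioi fun x _ => heven x
  have h2 : (∫ x in Iic (0:ℝ), gaussianPDFReal 0 s x) + ∫ x in Ioi (0:ℝ), gaussianPDFReal 0 s x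
      = ∫ x, gaussianPDFReal 0 s x :=
    intervalIntegral.integral_Iic_add_Ioi (integrable_gaussianPDFReal 0 s).integrableOn
      (integrable_gaussianPDFReal 0 s).integrableOn
  rw [integral_gaussianPDFReal_eq_one 0 hs, h1] at h2
  linarith

lemma gaussian_tail (s : ℝ≥0) {u : ℝ} (hu : 0 ≤ u) :
    gaussianReal 0 s (Set.Ioi u) ≤ ENNReal.ofReal ((1/2) * rexp (-u^2 / (2*s))) := by
  by_cases hs : s = 0
  · subst hs
    rw [gaussianReal_zero_var, Measure.dirac_apply' _ measurableSet_Ioi]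
    simp only [Set.indicator_apply, Set.mem_Ioi]
    rw [if_neg (by linarith)]
    positivity
  have hs' : (0:ℝ) < s := lt_of_le_of_ne s.coe_nonneg (by exact_mod_cast Ne.symm hs)
  rw [gaussianReal_apply_eq_integral 0 hs]
  apply ENNReal.ofReal_le_ofReal
  have hshift : ∫ x in Ioi u, gaussianPDFReal u s x = 1/2 := by
    have hmp : MeasurePreserving (fun x : ℝ => x + u) volume volume :=
      measurePreserving_add_right volume u
    have hemb : MeasurableEmbedding (fun x : ℝ => x + u) :=
      (MeasurableEquiv.addRight u).measurableEmbedding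
    have hpre : (fun x : ℝ => x + u) ⁻¹' (Ioi u) = Ioi 0 := by
      ext x; simp [Set.mem_Ioi]
    have := hmp.setIntegral_preimage_emb hemb (gaussianPDFReal u s) (Ioi u)
    rw [hpre] at this
    rw [← this]
    rw [← gaussian_half s hs]
    refine setIntegral_congr_fun measurableSet_Ioi fun x _ => ?_
    rw [gaussianPDFReal_add, sub_self]
  have hmono : ∀ x ∈ Ioi u, gaussianPDFReal 0 s x
      ≤ rexp (-u^2 / (2*s)) * gaussianPDFReal u s x := by
    intro x hx
    have hx' : u < x := hx
    have hrhs : rexp (-u^2 / (2*(s:ℝ))) * gaussianPDFReal u s x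
        = (√(2*π*s))⁻¹ * rexp (-u^2/(2*s) + -(x-u)^2/(2*s)) := by
      rw [gaussianPDFReal, Real.exp_add]; ring
    rw [gaussianPDFReal, hrhs, sub_zero]
    have hC : (0:ℝ) ≤ (√(2*π*s))⁻¹ := by positivity
    refine mul_le_mul_of_nonneg_left ?_ hC
    rw [Real.exp_le_exp, ← add_div, div_le_div_iff_of_pos_right (by positivity)]
    nlinarith
  calc ∫ x in Ioi u, gaussianPDFReal 0 s x
      ≤ ∫ x in Ioi u, rexp (-u^2 / (2*s)) * gaussianPDFReal u s x := by
        refine setIntegral_mono_on (integrable_gaussianPDFReal 0 s).integrableOn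
          ((integrable_gaussianPDFReal u s).const_mul _).integrableOn
          measurableSet_Ioi hmono
    _ = rexp (-u^2 / (2*s)) * ∫ x in Ioi u, gaussianPDFReal u s x := integral_const_mul _ _
    _ = 1/2 * rexp (-u^2 / (2*s)) := by rw [hshift]; ring

/-- **Gaussian density-ratio concentration (Theorem 3, case 2).** Let `b ∈ ℝ^p` have
independent `N(0, σ²)` coordinates with `σ = c·ε′/ε`, where `0 < ε < 1`, `ε′ > 0` and
`c > √(2 ln 1.5)`. Then for every fixed `v` with `‖v‖₂ ≤ ε′`, with probability at least
`1 − δ` (with `δ = 1.5·e^{−c²/2}`) over the draw of `b`, the Gaussian density `p`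
satisfies `e^{−ε} ≤ p(b)/p(b+v) ≤ e^{ε}`. -/
theorem gaussian_density_ratio_bound_whp
    {p : ℕ} (ε ε' c σ : ℝ)
    (hε0 : 0 < ε) (hε1 : ε < 1) (hε' : 0 < ε')
    (hc : Real.sqrt (2 * Real.log 1.5) < c)
    (hσ : σ = c * ε' / ε)
    (v : EuclideanSpace ℝ (Fin p)) (hv : ‖v‖ ≤ ε')
    -- `μ` is the law of `b`, with independent `N(0, σ²)` coordinates
    (μ : Measure (EuclideanSpace ℝ (Fin p)))
    (hμ : μ = (Measure.pi fun _ : Fin p => gaussianReal 0 (Real.toNNReal (σ ^ 2))).map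
        (MeasurableEquiv.toLp 2 (Fin p → ℝ)))
    -- `pdf` is the density of the `p`-dimensional Gaussian `N(0, σ² I)`
    (pdf : EuclideanSpace ℝ (Fin p) → ℝ)
    (hpdf : ∀ b : EuclideanSpace ℝ (Fin p),
      pdf b = ∏ i, gaussianPDFReal 0 (Real.toNNReal (σ ^ 2)) (b i)) :
    ENNReal.ofReal (1 - 1.5 * Real.exp (-c ^ 2 / 2)) ≤
      μ {b : EuclideanSpace ℝ (Fin p) |
        Real.exp (-ε) ≤ pdf b / pdf (b + v) ∧ pdf b / pdf (b + v) ≤ Real.exp ε} := by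
  -- numeric preliminaries
  have hc0 : 0 < c := lt_of_le_of_lt (Real.sqrt_nonneg _) hc
  have hc2 : 2 * Real.log 1.5 < c ^ 2 := by
    have := (Real.sqrt_lt' hc0).mp hc
    exact this
  have hlog : (1/4 : ℝ) < Real.log 1.5 := by
    rw [Real.lt_log_iff_exp_lt (by norm_num)]
    have h4 : rexp (1/4) ^ (4:ℕ) = rexp 1 := by
      rw [← Real.exp_nat_mul]; norm_num
    have he1 : rexp 1 < 2.7182818286 := Real.exp_one_lt_d9
    refine lt_of_pow_lt_pow_left₀ 4 (by norm_num) ?_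
    rw [h4]
    nlinarith
  have hchalf : 1/2 < c ^ 2 := by linarith
  have hσ0 : 0 < σ := by rw [hσ]; positivity
  set s : ℝ≥0 := Real.toNNReal (σ ^ 2) with hs_def
  have hsne : s ≠ 0 := by
    rw [hs_def, ne_eq, Real.toNNReal_eq_zero, not_le]; positivity
  have hsco : (s : ℝ) = σ ^ 2 := Real.coe_toNNReal _ (sq_nonneg σ)
  set S : ℝ := σ ^ 2 with hS_def
  have hS0 : 0 < S := by rw [hS_def]; positivity
  set V : ℝ := ∑ i, (v i) ^ 2 with hV_def
  have hVnn : 0 ≤ V := Finset.sum_nonneg fun i _ => sq_nonneg _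
  have hVle : V ≤ ε' ^ 2 := by
    have hnorm : ‖v‖ ^ 2 = V := by
      rw [EuclideanSpace.norm_eq, Real.sq_sqrt (by positivity)]
      simp [hV_def, Real.norm_eq_abs, sq_abs]
    calc V = ‖v‖ ^ 2 := hnorm.symm
      _ ≤ ε' ^ 2 := by
          apply pow_le_pow_left₀ (norm_nonneg v) hv
  have hSε : S * ε ^ 2 = c ^ 2 * ε' ^ 2 := by
    rw [hS_def, hσ]
    field_simp
  set A : ℝ := -(S * ε) - V / 2 with hA_def
  set B : ℝ := S * ε - V / 2 with hB_def
  have hSεpos : 0 < S * ε := mul_pos hS0 hε0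
  have hB0 : 0 < B := by
    rw [hB_def]
    nlinarith [hSε, hVle, hchalf, hε0, hε1, hSεpos, sq_nonneg ε']
  have hA0 : A < 0 := by
    rw [hA_def]
    nlinarith [hSεpos, hVnn]
  set T : EuclideanSpace ℝ (Fin p) → ℝ := fun b => ∑ i, v i * b i with hT_def
  -- the product density formula
  have hprod : ∀ x : Fin p → ℝ, (∏ i, gaussianPDFReal 0 s (x i))
      = ((√(2 * π * S))⁻¹) ^ p * rexp ((-∑ i, (x i) ^ 2) / (2 * S)) := by
    intro x
    unfold gaussianPDFReal
    rw [Finset.prod_mul_distrib, Finset.prod_const, ← Real.exp_sum,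
      Finset.card_univ, Fintype.card_fin]
    congr 1
    · rw [hsco]
    · congr 1
      rw [← Finset.sum_neg_distrib, ← Finset.sum_div]
      congr 1
      · refine Finset.sum_congr rfl fun i _ => ?_
        rw [sub_zero]
      · rw [hsco]
  -- the event rewritten as a linear condition
  have hmem : ∀ b : EuclideanSpace ℝ (Fin p),
      (Real.exp (-ε) ≤ pdf b / pdf (b + v) ∧ pdf b / pdf (b + v) ≤ Real.exp ε)
      ↔ (A ≤ T b ∧ T b ≤ B) := by
    intro b
    have hratio : pdf b / pdf (b + v) = rexp ((2 * T b + V) / (2 * S)) := by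
      rw [hpdf, hpdf]
      simp only [hprod]
      rw [mul_div_mul_left _ _ (by positivity), ← Real.exp_sub]
      congr 1
      rw [div_sub_div_same]
      congr 1
      have hadd : ∀ i, ((b + v) i) ^ 2 = (b i) ^ 2 + (2 * (v i * b i) + (v i) ^ 2) := by
        intro i
        have : (b + v) i = b i + v i := rfl
        rw [this]; ring
      rw [Finset.sum_congr rfl fun i _ => hadd i, Finset.sum_add_distrib,
        Finset.sum_add_distrib, ← Finset.mul_sum, hT_def, hV_def]
      ring
    rw [hratio, Real.exp_le_exp, Real.exp_le_exp,
      le_div_iff₀ (by positivity), div_le_iff₀ (by positivity)]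
    constructor <;> rintro ⟨h1, h2⟩ <;>
      exact ⟨by rw [hA_def] at *; linarith, by rw [hB_def] at *; linarith⟩
  have hEset : {b : EuclideanSpace ℝ (Fin p) |
      Real.exp (-ε) ≤ pdf b / pdf (b + v) ∧ pdf b / pdf (b + v) ≤ Real.exp ε}
      = T ⁻¹' (Set.Icc A B) := by
    ext b
    rw [Set.mem_setOf_eq, Set.mem_preimage, Set.mem_Icc]
    exact hmem b
  have hgpi : Measurable (fun x : Fin p → ℝ => ∑ i, v i * x i) :=
    Finset.measurable_sum _ fun i _ => (measurable_pi_apply i).const_mul _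
  have hTmeas : Measurable T :=
    hgpi.comp (MeasurableEquiv.toLp 2 (Fin p → ℝ)).symm.measurable
  -- the law of T under μ
  set var : ℝ≥0 := ∑ i, Real.toNNReal ((v i) ^ 2) * s with hvar_def
  have hvarco : (var : ℝ) = V * S := by
    rw [hvar_def, NNReal.coe_sum, hV_def, Finset.sum_mul]
    refine Finset.sum_congr rfl fun i _ => ?_
    rw [NNReal.coe_mul, Real.coe_toNNReal _ (sq_nonneg _), hsco]
  have hμE : μ (T ⁻¹' (Set.Icc A B)) = gaussianReal 0 var (Set.Icc A B) := by
    rw [hμ, Measure.map_apply (MeasurableEquiv.toLp 2 (Fin p → ℝ)).measurable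
      (hTmeas measurableSet_Icc)]
    have hpre : (⇑(MeasurableEquiv.toLp 2 (Fin p → ℝ))) ⁻¹' (T ⁻¹' Set.Icc A B)
        = (fun x : Fin p → ℝ => ∑ i, v i * x i) ⁻¹' Set.Icc A B := rfl
    rw [hpre, ← Measure.map_apply hgpi measurableSet_Icc,
      pi_gaussian_map_sum s p (fun i => v i)]
  rw [hEset, hμE]
  clear_value T var A B V S s
  -- probability bound
  have hδnn : (0:ℝ) ≤ 1.5 * Real.exp (-c ^ 2 / 2) := by positivity
  by_cases hV0 : V = 0
  · -- degenerate case: v = 0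
    have hvar0 : var = 0 := by
      have : (var : ℝ) = 0 := by rw [hvarco, hV0, zero_mul]
      exact_mod_cast this
    rw [hvar0, gaussianReal_zero_var, Measure.dirac_apply' _ measurableSet_Icc]
    have h0mem : (0:ℝ) ∈ Set.Icc A B := ⟨hA0.le, hB0.le⟩
    rw [Set.indicator_of_mem h0mem]
    exact le_trans (ENNReal.ofReal_le_one.mpr (by linarith)) le_rfl
  have hVpos : 0 < V := lt_of_le_of_ne hVnn (Ne.symm hV0)
  have hVS : 0 < V * S := mul_pos hVpos hS0
  -- tail bounds
  have hkey1 : (c ^ 2 - ε) * (V * S) ≤ B ^ 2 := by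
    have h10 : (c ^ 2 - ε) * (V * S) * ε ^ 2 ≤ (B * ε) ^ 2 := by
      have hBε : B * ε = c ^ 2 * ε' ^ 2 - V * ε / 2 := by
        rw [hB_def]
        nlinarith [hSε]
      have hred : (c ^ 2 - ε) * (V * S) * ε ^ 2 = (c ^ 2 - ε) * V * (c ^ 2 * ε' ^ 2) := by
        rw [← hSε]; ring
      rw [hred, hBε]
      nlinarith [mul_nonneg (mul_nonneg (sq_nonneg (c ^ 2)) (sq_nonneg ε'))
          (sub_nonneg.mpr hVle), sq_nonneg (V * ε), hVnn, hε0.le, sq_nonneg c,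
        mul_nonneg hVnn (sq_nonneg ε')]
    nlinarith [h10, pow_pos hε0 2, sq_nonneg (B*ε)]
  have hkey2 : c ^ 2 * (V * S) ≤ A ^ 2 := by
    have h11 : S * ε * V ≥ 0 := by positivity
    rw [hA_def]
    nlinarith [hSε, hVle, hS0, hVnn, sq_nonneg V, mul_pos hS0 hS0, h11,
      mul_le_mul_of_nonneg_left hVle hS0.le]
  have htailB : gaussianReal 0 var (Set.Ioi B) ≤
      ENNReal.ofReal ((1/2) * rexp (-B ^ 2 / (2 * (V * S)))) := by
    have := gaussian_tail var hB0.le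
    rwa [hvarco] at this
  have hsymmν : (gaussianReal 0 var).map (fun x : ℝ => -x) = gaussianReal 0 var := by
    have h2 := gaussianReal_map_const_mul (μ := 0) (v := var) (-1)
    have h3 : NNReal.mk ((-1:ℝ) ^ 2) (sq_nonneg _) = 1 := by ext; norm_num
    rw [h3, one_mul, mul_zero] at h2
    rw [show (fun x : ℝ => -x) = fun x : ℝ => (-1) * x from funext fun x => by ring]
    exact h2
  have htailA : gaussianReal 0 var (Set.Iio A) ≤
      ENNReal.ofReal ((1/2) * rexp (-(-A) ^ 2 / (2 * (V * S)))) := by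
    have hrefl : gaussianReal 0 var (Set.Iio A) = gaussianReal 0 var (Set.Ioi (-A)) := by
      conv_lhs => rw [← hsymmν]
      rw [Measure.map_apply measurable_neg measurableSet_Iio]
      congr 1
      ext x
      simp only [Set.mem_preimage, Set.mem_Iio, Set.mem_Ioi]
      constructor <;> intro h <;> linarith
    rw [hrefl]
    have := gaussian_tail var (u := -A) (by linarith)
    rwa [hvarco] at this
  -- sum the two tails
  have hexpA : rexp (-(-A) ^ 2 / (2 * (V * S))) ≤ rexp (-c ^ 2 / 2) := by
    rw [neg_sq, Real.exp_le_exp, div_le_iff₀ (show (0:ℝ) < 2 * (V * S) by linarith)]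
    nlinarith [hkey2]
  have hexpB : rexp (-B ^ 2 / (2 * (V * S))) ≤ 2 * rexp (-c ^ 2 / 2) := by
    have h1 : rexp (-B ^ 2 / (2 * (V * S))) ≤ rexp ((1 - c ^ 2) / 2) := by
      rw [Real.exp_le_exp, div_le_iff₀ (show (0:ℝ) < 2 * (V * S) by linarith)]
      nlinarith [hkey1, hVS, mul_nonneg (le_of_lt (show (0:ℝ) < 1 - ε by linarith)) hVS.le]
    have h2 : rexp ((1 - c ^ 2) / 2) = rexp (1/2) * rexp (-c ^ 2 / 2) := by
      rw [← Real.exp_add]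
      congr 1
      ring
    have h5 : rexp (1/2) ^ (2:ℕ) = rexp 1 := by
      rw [← Real.exp_nat_mul]; norm_num
    have h6 : rexp (1/2) ≤ 2 := by
      nlinarith [Real.exp_one_lt_d9, Real.exp_pos (1/2 : ℝ)]
    have h7 : rexp ((1 - c ^ 2) / 2) ≤ 2 * rexp (-c ^ 2 / 2) := by
      rw [h2]
      have := Real.exp_pos (-c ^ 2 / 2)
      nlinarith
    linarith
  have htot : gaussianReal 0 var (Set.Icc A B)ᶜ ≤
      ENNReal.ofReal (1.5 * Real.exp (-c ^ 2 / 2)) := by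
    have hcompl : (Set.Icc A B)ᶜ = Set.Iio A ∪ Set.Ioi B := by
      ext x
      simp only [Set.mem_compl_iff, Set.mem_Icc, Set.mem_union, Set.mem_Iio, Set.mem_Ioi,
        not_and_or, not_le]
    rw [hcompl]
    refine le_trans (measure_union_le _ _) ?_
    refine le_trans (add_le_add htailA htailB) ?_
    rw [← ENNReal.ofReal_add (by positivity) (by positivity)]
    apply ENNReal.ofReal_le_ofReal
    have := Real.exp_pos (-c ^ 2 / 2)
    nlinarith [hexpA, hexpB]
  -- conclude
  calc ENNReal.ofReal (1 - 1.5 * Real.exp (-c ^ 2 / 2))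
      = 1 - ENNReal.ofReal (1.5 * Real.exp (-c ^ 2 / 2)) := by
        rw [ENNReal.ofReal_sub _ hδnn, ENNReal.ofReal_one]
    _ ≤ 1 - gaussianReal 0 var (Set.Icc A B)ᶜ := tsub_le_tsub_left htot 1
    _ = gaussianReal 0 var (Set.Icc A B) := by
        rw [prob_compl_eq_one_sub measurableSet_Icc,
          ENNReal.sub_sub_cancel ENNReal.one_ne_top prob_le_one]
end
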